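/- arXiv:1903.01094 — 3 statements merged into one kernel-verified Lean document; each statement's English description precedes it below -/
import Mathlib

section
/- Let C be a k-linear Hom-finite small category. The categories of finitely generated C-modules and of finitely cogenerated C-modules are Hom-finite Krull–Schmidt categories: every object decomposes into a finite direct sum of objects with local endomorphism rings. -/
noncomputable section
namespace ARPaper
open CategoryTheory CategoryTheory.Limits Opposite

universe u v

variable (k : Type) [Field k]

/-- The category of `C`-modules: `k`-linear functors `C ⥤ Mod k`. -/
abbrev Mod (C : Type) [SmallCategory C] : Type 1 := C ⥤ ModuleCat.{0} k

variable (C : Type) [SmallCategory C] [Preadditive C] [Linear k C]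

instance : HasFiniteBiproducts (Mod k C) := HasFiniteBiproducts.of_hasFiniteProducts

/-- The representable projective `C(a,-)`. -/
def stdProj (a : C) : Mod k C := (linearCoyoneda k C).obj (op a)

/-- The `k`-linear duality functor `D = Hom_k(-,k)` on `Mod k`, from the opposite category. -/
def dualOp : (ModuleCat k)ᵒᵖ ⥤ ModuleCat k where
  obj M := ModuleCat.of k (Module.Dual k M.unop)
  map f := ModuleCat.ofHom f.unop.hom.dualMap
  map_id X := by ext f; rfl
  map_comp f g := by ext x; rfl

/-- `D` applied to a `k`-module. -/
def DOf (V : ModuleCat k) : ModuleCat k := ModuleCat.of k (Module.Dual k V)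

/-- `D` applied to a linear map (contravariantly). -/
def DMap {V W : ModuleCat k} (f : V ⟶ W) : DOf k W ⟶ DOf k V :=
  ModuleCat.ofHom f.hom.dualMap

/-- `D` of a `Cᵒᵖ`-module, giving a `C`-module. -/
def DModL (N : Cᵒᵖ ⥤ ModuleCat k) : Mod k C := N.rightOp ⋙ dualOp k

/-- `D` of a `C`-module, giving a `Cᵒᵖ`-module. -/
def DModR (M : Mod k C) : Cᵒᵖ ⥤ ModuleCat k := M.op ⋙ dualOp k

/-- The standard finitely cogenerated injective `D C(-,a)`. -/
def stdInj (a : C) : Mod k C := DModL k C ((linearYoneda k C).obj a)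

/-- `X` is a direct summand of `Y`. -/
def IsSummand {D : Type u} [Category.{v} D] (X Y : D) : Prop :=
  ∃ (s : X ⟶ Y) (r : Y ⟶ X), s ≫ r = 𝟙 X

/-- Finitely generated projective: a direct summand of a finite direct sum of representables. -/
def FGProj (P : Mod k C) : Prop :=
  ∃ (n : ℕ) (a : Fin n → C), IsSummand P (⨁ fun i => stdProj k C (a i))

/-- Finitely cogenerated injective: a summand of a finite direct sum of the `D C(-,a)`. -/
def FCGInj (I : Mod k C) : Prop :=
  ∃ (n : ℕ) (a : Fin n → C), IsSummand I (⨁ fun i => stdInj k C (a i))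

/-- Finitely generated module: admits an epimorphism from a f.g. projective. -/
def FGmod (M : Mod k C) : Prop :=
  ∃ (P : Mod k C) (p : P ⟶ M), FGProj k C P ∧ Epi p

/-- Finitely cogenerated module: admits a monomorphism into a f.cog. injective. -/
def FCGmod (M : Mod k C) : Prop :=
  ∃ (I : Mod k C) (m : M ⟶ I), FCGInj k C I ∧ Mono m

/-- Finitely copresented module. -/
def FCPmod (M : Mod k C) : Prop :=
  ∃ (I : Mod k C) (m : M ⟶ I), FCGInj k C I ∧ Mono m ∧ FCGmod k C (cokernel m)

end ARPaper

namespace KSAux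

open CategoryTheory CategoryTheory.Limits Opposite Module ARPaper
set_option linter.unusedSectionVars false

universe v u

section Ring

open Polynomial in
theorem trichotomy_of_finiteDimensional (k : Type) [Field k] (R : Type v) [Ring R]
    [Algebra k R] [FiniteDimensional k R] (x : R) :
    IsUnit x ∨ IsNilpotent x ∨ ∃ e : R, e * e = e ∧ e ≠ 0 ∧ e ≠ 1 := by
  obtain ⟨p, pm, hp⟩ := IsIntegral.of_finite k x
  have hp' : aeval x p = 0 := by rwa [aeval_def]
  obtain ⟨m, q, hq, hfac⟩ := WfDvdMonoid.max_power_factor pm.ne_zero Polynomial.irreducible_X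
  have hc : IsCoprime ((X : k[X]) ^ m) q :=
    (Polynomial.irreducible_X.coprime_iff_not_dvd.mpr hq).pow_left
  obtain ⟨u, v, huv⟩ := hc
  set A := aeval (R := k) x with hA
  have hApz : A p = 0 := hp'
  rcases Nat.eq_zero_or_pos m with hm | hm
  · -- p has nonzero constant term, x is a unit
    left
    have hpq : p = q := by rw [hfac, hm, pow_zero, one_mul]
    have hc0 : p.coeff 0 ≠ 0 := by
      intro h
      exact hq (hpq ▸ Polynomial.X_dvd_iff.mpr h)
    set c := p.coeff 0
    set y := (-(c⁻¹)) • A p.divX with hy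
    have hxd : x * A p.divX = -(algebraMap k R c) := by
      have : (X : k[X]) * p.divX = p - C c := by
        rw [eq_sub_iff_add_eq, Polynomial.X_mul_divX_add]
      calc x * A p.divX = A (X * p.divX) := by simp [hA]
        _ = A p - A (C c) := by rw [this, map_sub]
        _ = -(algebraMap k R c) := by rw [hApz]; simp [hA]
    have hcomm : x * A p.divX = A p.divX * x := by
      have : A (X * p.divX) = A (p.divX * X) := by rw [mul_comm]
      simpa [hA, map_mul] using this
    refine isUnit_iff_exists.mpr ⟨y, ?_, ?_⟩
    · rw [hy, mul_smul_comm, hxd, smul_neg, neg_smul, neg_neg, Algebra.smul_def,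
        ← map_mul, inv_mul_cancel₀ hc0, map_one]
    · rw [hy, smul_mul_assoc, ← hcomm, hxd, smul_neg, neg_smul, neg_neg, Algebra.smul_def,
        ← map_mul, inv_mul_cancel₀ hc0, map_one]
  · set e := A (u * X ^ m) with he
    have h1 : e + A (v * q) = 1 := by rw [he, ← map_add, huv, map_one]
    have hevq : e * A (v * q) = 0 := by
      rw [he, ← map_mul]
      have : u * X ^ m * (v * q) = u * v * p := by rw [hfac]; ring
      rw [this, map_mul, hApz, mul_zero]
    have hee : e * e = e := by
      have : e * (e + A (v * q)) = e := by rw [h1, mul_one]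
      rw [mul_add, hevq, add_zero] at this
      exact this
    by_cases he0 : e = 0
    · right; left
      have hvq1 : A (v * q) = 1 := by rw [← h1, he0, zero_add]
      refine ⟨m, ?_⟩
      have : x ^ m = A (X ^ m) := by simp [hA]
      rw [this, ← mul_one (A (X ^ m)), ← hvq1, ← map_mul]
      have : (X : k[X]) ^ m * (v * q) = v * p := by rw [hfac]; ring
      rw [this, map_mul, hApz, mul_zero]
    · by_cases he1 : e = 1
      · left
        set w := A (u * X ^ (m - 1)) with hw
        have hXm : (X : k[X]) ^ m = X ^ (m - 1) * X := by
          rw [← pow_succ, Nat.sub_add_cancel hm]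
        have hxw : x * w = 1 := by
          rw [← he1, he, hw, hXm]
          have h2 : u * (X ^ (m - 1) * X) = X * (u * X ^ (m - 1)) := by ring
          rw [h2]
          simp only [hA, map_mul, aeval_X]
        have hwx : w * x = 1 := by
          rw [← he1, he, hw, hXm]
          have h2 : u * (X ^ (m - 1) * X) = u * X ^ (m - 1) * X := by ring
          rw [h2]
          simp only [hA, map_mul, aeval_X]
        exact isUnit_iff_exists.mpr ⟨w, hxw, hwx⟩
      · exact Or.inr (Or.inr ⟨e, hee, he0, he1⟩)

theorem isLocalRing_of_no_idem (k : Type) [Field k] (R : Type v) [Ring R] [Nontrivial R]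
    [Algebra k R] [FiniteDimensional k R]
    (h : ∀ e : R, e * e = e → e = 0 ∨ e = 1) : IsLocalRing R := by
  refine ⟨fun {a b} hab => ?_⟩
  rcases trichotomy_of_finiteDimensional k R a with hu | hn | ⟨e, he, h0, h1⟩
  · exact Or.inl hu
  · exact Or.inr (by simpa [eq_sub_of_add_eq' hab] using hn.isUnit_one_sub)
  · exact absurd (h e he) (by simp [h0, h1])

end Ring

section KS

variable {D : Type u} [Category.{0} D] [Preadditive D] [HasFiniteBiproducts D]

attribute [local instance] hasBinaryBiproducts_of_finite_biproducts

/-- Merging two finite biproducts into one over the sum type. -/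
noncomputable def sumBiprodIso {n m : ℕ} (F : Fin n → D) (G : Fin m → D) :
    (⨁ F) ⊞ (⨁ G) ≅ ⨁ (Sum.elim F G) where
  hom := biprod.desc (biproduct.desc fun i => biproduct.ι (Sum.elim F G) (.inl i))
    (biproduct.desc fun j => biproduct.ι (Sum.elim F G) (.inr j))
  inv := biproduct.desc fun s => Sum.rec (motive := fun s => Sum.elim F G s ⟶ (⨁ F) ⊞ (⨁ G))
    (fun i => biproduct.ι F i ≫ biprod.inl) (fun j => biproduct.ι G j ≫ biprod.inr) s
  hom_inv_id := by
    apply biprod.hom_ext' <;> apply biproduct.hom_ext' <;> intro i <;> simp <;> erw [biproduct.ι_desc_assoc, biproduct.ι_desc]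
  inv_hom_id := by
    apply biproduct.hom_ext' ; rintro (i | j) <;> simp <;> erw [biproduct.ι_desc_assoc] <;> simp <;> erw [biproduct.ι_desc] <;> exact (Category.comp_id _).symm

open Module

variable (k : Type) [Field k] [CategoryTheory.Linear k D] [IsIdempotentComplete D]

theorem ks_aux : ∀ (d : ℕ) (M : D), FiniteDimensional k (M ⟶ M) → finrank k (M ⟶ M) ≤ d →
    ∃ (n : ℕ) (F : Fin n → D), (∀ i, IsLocalRing (End (F i))) ∧ Nonempty (M ≅ ⨁ F) := by
  intro d
  induction d with
  | zero =>
    intro M hfd hle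
    -- rank 0, so `𝟙 M = 0` and `M` is a zero object
    have h0 : (𝟙 M : M ⟶ M) = 0 := by
      by_contra h
      haveI := hfd
      have : Nontrivial (M ⟶ M) := ⟨⟨𝟙 M, 0, h⟩⟩
      have := Module.finrank_pos_iff (R := k) (M := (M ⟶ M)) |>.mpr this
      omega
    refine ⟨0, Fin.elim0, fun i => i.elim0, ⟨?_⟩⟩
    have hz : IsZero M := by rw [IsZero.iff_id_eq_zero]; exact h0
    have hz' : IsZero (⨁ (Fin.elim0 : Fin 0 → D)) := by
      rw [IsZero.iff_id_eq_zero]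
      apply biproduct.hom_ext
      exact fun i => i.elim0
    exact hz.iso hz'
  | succ d ih =>
    intro M hfd hle
    haveI := hfd
    by_cases h0 : (𝟙 M : M ⟶ M) = 0
    · refine ⟨0, Fin.elim0, fun i => i.elim0, ⟨?_⟩⟩
      have hz : IsZero M := by rw [IsZero.iff_id_eq_zero]; exact h0
      have hz' : IsZero (⨁ (Fin.elim0 : Fin 0 → D)) := by
        rw [IsZero.iff_id_eq_zero]
        apply biproduct.hom_ext
        exact fun i => i.elim0
      exact hz.iso hz'
    · haveI : Nontrivial (End M) := ⟨⟨𝟙 M, 0, h0⟩⟩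
      haveI : FiniteDimensional k (End M) := hfd
      by_cases hloc : IsLocalRing (End M)
      · have hiso1 : M ≅ ⨁ (fun _ : Fin 1 => M) := by
          refine ⟨biproduct.lift fun _ => 𝟙 M, biproduct.π _ 0, by simp, ?_⟩
          apply biproduct.hom_ext
          intro j
          have : j = 0 := Subsingleton.elim _ _
          subst this
          simp
        exact ⟨1, fun _ => M, fun _ => hloc, ⟨hiso1⟩⟩
      · -- there is a nontrivial idempotent
        have hex : ∃ e : End M, e * e = e ∧ e ≠ 0 ∧ e ≠ 1 := by
          by_contra hno
          push_neg at hno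
          refine hloc (isLocalRing_of_no_idem k (CategoryTheory.End M) fun e he => ?_)
          by_cases h1 : e = 0
          · exact Or.inl h1
          · exact Or.inr (hno e he h1)
        obtain ⟨e₀, hee₀, he0₀, he1₀⟩ := hex
        obtain ⟨e, rfl⟩ : ∃ e : M ⟶ M, (e : End M) = e₀ := ⟨e₀, rfl⟩
        have hee : e ≫ e = e := hee₀
        have he0 : e ≠ (0 : M ⟶ M) := he0₀
        have he1 : e ≠ 𝟙 M := he1₀
        have heec : (e : M ⟶ M) ≫ e = e := hee
        have he'c : ((𝟙 M - e : M ⟶ M)) ≫ (𝟙 M - e) = (𝟙 M - e) := by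
          simp [Preadditive.sub_comp, Preadditive.comp_sub, heec]
        obtain ⟨A, iA, pA, hA1, hA2⟩ := IsIdempotentComplete.idempotents_split M e heec
        obtain ⟨B, iB, pB, hB1, hB2⟩ := IsIdempotentComplete.idempotents_split M (𝟙 M - e) he'c
        -- basic identities
        have hiA_e : iA ≫ (𝟙 M - e) = 0 := by
          rw [Preadditive.comp_sub, ← hA2, ← Category.assoc, hA1]; simp
        have hiB_e : iB ≫ e = 0 := by
          have : iB ≫ (𝟙 M - (𝟙 M - e)) = 0 := by
            rw [Preadditive.comp_sub, ← hB2, ← Category.assoc, hB1]; simp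
          simpa using this
        have hiA_pB : iA ≫ pB = 0 := by
          have : iA ≫ (pB ≫ iB) ≫ pB = 0 := by rw [hB2, ← Category.assoc, hiA_e]; simp
          simpa [hB1] using this
        have hiB_pA : iB ≫ pA = 0 := by
          have : iB ≫ (pA ≫ iA) ≫ pA = 0 := by rw [hA2, ← Category.assoc, hiB_e]; simp
          simpa [hA1] using this
        -- M ≅ A ⊞ B
        have hiso : M ≅ A ⊞ B := by
          refine ⟨biprod.lift pA pB, biprod.desc iA iB, ?_, ?_⟩
          · rw [biprod.lift_desc, hA2, hB2]; simp
          · apply biprod.hom_ext' <;> apply biprod.hom_ext <;>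
              simp [hA1, hB1, hiA_pB, hiB_pA]
        -- `End A` embeds into `End M` with proper image
        have embed : ∀ (Z : D) (i : Z ⟶ M) (p : M ⟶ Z), i ≫ p = 𝟙 Z →
            ∃ φ : (Z ⟶ Z) →ₗ[k] (M ⟶ M), Function.Injective φ ∧
              ∀ f, i ≫ φ f ≫ p = f := by
          intro Z i p hip
          have key : ∀ f : Z ⟶ Z, i ≫ (p ≫ f ≫ i) ≫ p = f := by
            intro f
            have h1 : i ≫ (p ≫ f ≫ i) ≫ p = (i ≫ p) ≫ f ≫ (i ≫ p) := by
              simp only [Category.assoc]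
            rw [h1, hip, Category.id_comp, Category.comp_id]
          refine ⟨⟨⟨fun f => p ≫ f ≫ i, fun f g => by
            simp [Preadditive.comp_add, Preadditive.add_comp]⟩, fun c f => by
            simp [CategoryTheory.Linear.comp_smul, CategoryTheory.Linear.smul_comp]⟩, ?_, ?_⟩
          · intro f g hfg
            have h2 : i ≫ (p ≫ f ≫ i) ≫ p = i ≫ (p ≫ g ≫ i) ≫ p :=
              congrArg (fun h : M ⟶ M => i ≫ h ≫ p) hfg
            rw [key f, key g] at h2
            exact h2
          · intro f
            exact key f
        obtain ⟨φA, hφAinj, hφA⟩ := embed A iA pA hA1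
        obtain ⟨φB, hφBinj, hφB⟩ := embed B iB pB hB1
        -- finite dimensionality of End A, End B
        haveI hfdA : FiniteDimensional k (A ⟶ A) := FiniteDimensional.of_injective φA hφAinj
        haveI hfdB : FiniteDimensional k (B ⟶ B) := FiniteDimensional.of_injective φB hφBinj
        -- strict rank inequalities
        have hrankA : finrank k (A ⟶ A) < finrank k (M ⟶ M) := by
          have : LinearMap.range φA ≠ ⊤ := by
            intro htop
            have : (𝟙 M - e : M ⟶ M) ∈ LinearMap.range φA := htop ▸ Submodule.mem_top
            obtain ⟨f, hf⟩ := this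
            have hf0 : f = 0 := by
              have := hφA f
              rw [hf] at this
              rw [← this, ← Category.assoc, hiA_e]; simp
            rw [hf0, map_zero] at hf
            exact he1 (sub_eq_zero.mp hf.symm).symm
          calc finrank k (A ⟶ A) = finrank k (LinearMap.range φA) :=
                (LinearMap.finrank_range_of_inj hφAinj).symm
            _ < finrank k (M ⟶ M) := Submodule.finrank_lt this
        have hrankB : finrank k (B ⟶ B) < finrank k (M ⟶ M) := by
          have : LinearMap.range φB ≠ ⊤ := by
            intro htop
            have : (e : M ⟶ M) ∈ LinearMap.range φB := htop ▸ Submodule.mem_top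
            obtain ⟨f, hf⟩ := this
            have hf0 : f = 0 := by
              have := hφB f
              rw [hf] at this
              rw [← this, ← Category.assoc, hiB_e]; simp
            rw [hf0, map_zero] at hf
            exact he0 (hf.symm)
          calc finrank k (B ⟶ B) = finrank k (LinearMap.range φB) :=
                (LinearMap.finrank_range_of_inj hφBinj).symm
            _ < finrank k (M ⟶ M) := Submodule.finrank_lt this
        -- recurse
        obtain ⟨n, F, hF, ⟨isoA⟩⟩ := ih A hfdA (by omega)
        obtain ⟨m, G, hG, ⟨isoB⟩⟩ := ih B hfdB (by omega)
        refine ⟨n + m, fun l => Sum.elim F G (finSumFinEquiv.symm l), ?_, ⟨?_⟩⟩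
        · intro l
          show IsLocalRing (End (Sum.elim F G (finSumFinEquiv.symm l)))
          rcases h : finSumFinEquiv.symm l with i | j
          · exact hF i
          · exact hG j
        · refine hiso ≪≫ biprod.mapIso isoA isoB ≪≫ sumBiprodIso F G ≪≫
            biproduct.whiskerEquiv finSumFinEquiv (fun s => eqToIso (by simp)) 

end KS

section HomFin

variable (k : Type) [Field k] (C : Type) [SmallCategory C] [Preadditive C]
  [CategoryTheory.Linear k C] [∀ a b : C, FiniteDimensional k (a ⟶ b)]

/-- transfer of finite-dimensionality along an iso of modules -/
theorem fd_of_iso {X Y : ModuleCat k} (i : X ≅ Y) (h : FiniteDimensional k Y) :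
    FiniteDimensional k X :=
  Module.Finite.equiv i.toLinearEquiv.symm

/-- A finite biproduct of pointwise finite dimensional modules is pointwise f.d. -/
theorem fd_biproduct_obj {n : ℕ} (f : Fin n → Mod k C)
    (h : ∀ i b, FiniteDimensional k ((f i).obj b)) (b : C) :
    FiniteDimensional k ((⨁ f).obj b) := by
  haveI := h
  have iso1 : (⨁ f).obj b ≅ ⨁ (fun i => (f i).obj b) := by
    have := Functor.mapBiproduct ((evaluation C (ModuleCat k)).obj b) f
    exact this ≪≫ eqToIso rfl
  refine fd_of_iso k iso1 ?_
  refine fd_of_iso k (ModuleCat.biproductIsoPi (fun i => (f i).obj b)) ?_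
  show FiniteDimensional k (∀ i, ((f i).obj b))
  infer_instance

theorem stdProj_obj_fd (a b : C) : FiniteDimensional k ((stdProj k C a).obj b) := by
  show FiniteDimensional k (a ⟶ b)
  infer_instance

theorem stdInj_obj_fd (a b : C) : FiniteDimensional k ((stdInj k C a).obj b) := by
  show FiniteDimensional k (Module.Dual k (b ⟶ a))
  infer_instance

/-- finitely generated modules are pointwise finite dimensional -/
theorem pw_of_fg {M : Mod k C} (h : FGmod k C M) (b : C) :
    FiniteDimensional k (M.obj b) := by
  obtain ⟨P, p, ⟨n, a, s, r, hsr⟩, hepi⟩ := h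
  haveI hQfd : FiniteDimensional k ((⨁ fun i => stdProj k C (a i)).obj b) :=
    fd_biproduct_obj k C _ (fun i b => stdProj_obj_fd k C (a i) b) b
  -- P.obj b is a quotient of Q.obj b
  have hsr_app : s.app b ≫ r.app b = 𝟙 (P.obj b) := by
    rw [← NatTrans.comp_app, hsr]; rfl
  have hr_surj : Function.Surjective (r.app b) := fun y =>
    ⟨s.app b y, by have := congrArg (fun (φ : P.obj b ⟶ P.obj b) => φ y) hsr_app; simpa using this⟩
  haveI hPfd : FiniteDimensional k (P.obj b) := Module.Finite.of_surjective (r.app b).hom hr_surj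
  -- M.obj b is a quotient of P.obj b
  haveI : Epi (p.app b) := inferInstance
  have hp_surj : Function.Surjective (p.app b) := (ModuleCat.epi_iff_surjective _).mp inferInstance
  exact Module.Finite.of_surjective (p.app b).hom hp_surj

/-- finitely cogenerated modules are pointwise finite dimensional -/
theorem pw_of_fcg {M : Mod k C} (h : FCGmod k C M) (b : C) :
    FiniteDimensional k (M.obj b) := by
  obtain ⟨I, m, ⟨n, a, s, r, hsr⟩, hmono⟩ := h
  haveI hJfd : FiniteDimensional k ((⨁ fun i => stdInj k C (a i)).obj b) :=
    fd_biproduct_obj k C _ (fun i b => stdInj_obj_fd k C (a i) b) b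
  have hsr_app : s.app b ≫ r.app b = 𝟙 (I.obj b) := by
    rw [← NatTrans.comp_app, hsr]; rfl
  have hs_inj : Function.Injective (s.app b) :=
    Function.LeftInverse.injective (g := r.app b) (fun x => by
      have := congrArg (fun (φ : I.obj b ⟶ I.obj b) => φ x) hsr_app
      simpa using this)
  haveI hIfd : FiniteDimensional k (I.obj b) := FiniteDimensional.of_injective
    (s.app b).hom hs_inj
  haveI : Mono (m.app b) := inferInstance
  have hm_inj : Function.Injective (m.app b) := (ModuleCat.mono_iff_injective _).mp inferInstance
  exact FiniteDimensional.of_injective (m.app b).hom hm_inj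

/-- Hom-finiteness transfers along an epi in the first argument. -/
theorem fd_hom_of_epi {P M N : Mod k C} (p : P ⟶ M) (hp : Epi p)
    (h : FiniteDimensional k (P ⟶ N)) : FiniteDimensional k (M ⟶ N) := by
  refine FiniteDimensional.of_injective (CategoryTheory.Linear.leftComp k N p) ?_
  intro f g hfg
  exact (cancel_epi p).mp hfg

/-- Hom-finiteness transfers along a mono in the second argument. -/
theorem fd_hom_of_mono {M N I : Mod k C} (m : N ⟶ I) (hm : Mono m)
    (h : FiniteDimensional k (M ⟶ I)) : FiniteDimensional k (M ⟶ N) := by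
  refine FiniteDimensional.of_injective (CategoryTheory.Linear.rightComp k M m) ?_
  intro f g hfg
  exact (cancel_mono m).mp hfg

/-- Hom-finiteness transfers along a retract in the first argument. -/
theorem fd_hom_of_retract {P Q N : Mod k C} (s : P ⟶ Q) (r : Q ⟶ P) (hsr : s ≫ r = 𝟙 P)
    (h : FiniteDimensional k (Q ⟶ N)) : FiniteDimensional k (P ⟶ N) := by
  refine FiniteDimensional.of_injective (CategoryTheory.Linear.leftComp k N r) ?_
  intro f g hfg
  have := congrArg (fun t => s ≫ t) hfg
  simpa [← Category.assoc, hsr] using this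

/-- Hom-finiteness transfers along a retract in the second argument. -/
theorem fd_hom_of_retract' {M I J : Mod k C} (s : I ⟶ J) (r : J ⟶ I) (hsr : s ≫ r = 𝟙 I)
    (h : FiniteDimensional k (M ⟶ J)) : FiniteDimensional k (M ⟶ I) := by
  refine FiniteDimensional.of_injective (CategoryTheory.Linear.rightComp k M s) ?_
  intro f g hfg
  have := congrArg (fun t => t ≫ r) hfg
  simpa [Category.assoc, hsr] using this

/-- Hom out of a finite biproduct. -/
theorem fd_hom_biproduct_left {n : ℕ} (f : Fin n → Mod k C) (N : Mod k C)
    (h : ∀ i, FiniteDimensional k (f i ⟶ N)) : FiniteDimensional k ((⨁ f) ⟶ N) := by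
  haveI := h
  refine FiniteDimensional.of_injective
    (LinearMap.pi (fun i => CategoryTheory.Linear.leftComp k N (biproduct.ι f i))) ?_
  intro g g' hgg
  apply biproduct.hom_ext'
  intro i
  exact congrFun hgg i

/-- Hom into a finite biproduct. -/
theorem fd_hom_biproduct_right {n : ℕ} (M : Mod k C) (f : Fin n → Mod k C)
    (h : ∀ i, FiniteDimensional k (M ⟶ f i)) : FiniteDimensional k (M ⟶ ⨁ f) := by
  haveI := h
  refine FiniteDimensional.of_injective
    (LinearMap.pi (fun i => CategoryTheory.Linear.rightComp k M (biproduct.π f i))) ?_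
  intro g g' hgg
  apply biproduct.hom_ext
  intro i
  exact congrFun hgg i

/-- Hom out of a standard projective. -/
theorem fd_hom_stdProj (a : C) (N : Mod k C) (h : FiniteDimensional k (N.obj a)) :
    FiniteDimensional k (stdProj k C a ⟶ N) := by
  refine FiniteDimensional.of_injective
    ((⟨⟨fun η => η.app a (𝟙 a), fun η η' => rfl⟩, fun c η => rfl⟩ :
      (stdProj k C a ⟶ N) →ₗ[k] N.obj a)) ?_
  intro η η' hh
  have hh' : η.app a (𝟙 a) = η'.app a (𝟙 a) := hh
  ext b (g : a ⟶ b)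
  have h1 := congrArg (fun (φ : (stdProj k C a).obj a ⟶ N.obj b) => φ (𝟙 a)) (η.naturality g)
  have h1' := congrArg (fun (φ : (stdProj k C a).obj a ⟶ N.obj b) => φ (𝟙 a)) (η'.naturality g)
  change η.app b ((stdProj k C a).map g (𝟙 a)) = N.map g (η.app a (𝟙 a)) at h1
  change η'.app b ((stdProj k C a).map g (𝟙 a)) = N.map g (η'.app a (𝟙 a)) at h1'
  have hg : ((stdProj k C a).map g) (𝟙 a) = g := by
    show 𝟙 a ≫ g = g
    simp
  erw [hg] at h1 h1'
  rw [h1, h1']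
  show N.map g (η.app a (𝟙 a)) = N.map g (η'.app a (𝟙 a))
  rw [hh']

/-- Evaluation helper: an element of `(stdInj a).obj b` is a dual vector. -/
def dEval (a b : C) (y : ((stdInj k C a).obj b : Type)) : Module.Dual k (b ⟶ a) := y

/-- Hom into a standard injective. -/
theorem fd_hom_stdInj (M : Mod k C) (a : C) (h : FiniteDimensional k (M.obj a)) :
    FiniteDimensional k (M ⟶ stdInj k C a) := by
  haveI : FiniteDimensional k (Module.Dual k (M.obj a)) := inferInstance
  have dapp_add : ∀ (η η' : M ⟶ stdInj k C a) (x : M.obj a),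
      dEval k C a a ((η + η').app a x) (𝟙 a)
        = dEval k C a a (η.app a x) (𝟙 a) + dEval k C a a (η'.app a x) (𝟙 a) := by
    intro η η' x
    rw [NatTrans.app_add]
    rfl
  have dapp_smul : ∀ (c : k) (η : M ⟶ stdInj k C a) (x : M.obj a),
      dEval k C a a ((c • η).app a x) (𝟙 a) = c • (dEval k C a a (η.app a x) (𝟙 a)) := by
    intro c η x
    rw [CategoryTheory.NatTrans.app_smul]
    rfl
  refine FiniteDimensional.of_injective
    ((⟨⟨fun η => ⟨⟨fun x => dEval k C a a (η.app a x) (𝟙 a),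
        fun x y => by
          show dEval k C a a (η.app a (x + y)) (𝟙 a) = _
          rw [map_add (η.app a).hom x y]; rfl⟩,
        fun c x => by
          show dEval k C a a (η.app a (c • x)) (𝟙 a) = _
          rw [map_smul (η.app a).hom c x]; rfl⟩,
      fun η η' => by ext x; exact dapp_add η η' x⟩,
      fun c η => by ext x; exact dapp_smul c η x⟩ :
      (M ⟶ stdInj k C a) →ₗ[k] Module.Dual k (M.obj a))) ?_
  intro η η' hh
  have hh' : ∀ y : M.obj a, dEval k C a a (η.app a y) (𝟙 a) = dEval k C a a (η'.app a y) (𝟙 a) :=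
    fun y => LinearMap.congr_fun hh y
  ext b (x : M.obj b)
  show dEval k C a b (η.app b x) = dEval k C a b (η'.app b x)
  apply LinearMap.ext
  intro (f : b ⟶ a)
  have key : ∀ (ξ : M ⟶ stdInj k C a),
      dEval k C a a ((ξ.app b ≫ (stdInj k C a).map f) x) (𝟙 a) = dEval k C a b (ξ.app b x) f := by
    intro ξ
    show dEval k C a b (ξ.app b x) (f ≫ 𝟙 a) = dEval k C a b (ξ.app b x) f
    rw [Category.comp_id]
  have h1 := congrArg
    (fun (φ : M.obj b ⟶ (stdInj k C a).obj a) => dEval k C a a (φ x) (𝟙 a))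
    (η.naturality f)
  have h1' := congrArg
    (fun (φ : M.obj b ⟶ (stdInj k C a).obj a) => dEval k C a a (φ x) (𝟙 a))
    (η'.naturality f)
  dsimp only at h1 h1'
  rw [key η] at h1
  rw [key η'] at h1'
  have e1 : dEval k C a b (η.app b x) f = dEval k C a a (η.app a (M.map f x)) (𝟙 a) := by
    rw [← h1]; rfl
  have e1' : dEval k C a b (η'.app b x) f = dEval k C a a (η'.app a (M.map f x)) (𝟙 a) := by
    rw [← h1']; rfl
  rw [e1, e1', hh']

end HomFin


section Final

variable (k : Type) [Field k] (C : Type) [SmallCategory C] [Preadditive C]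
  [CategoryTheory.Linear k C] [∀ a b : C, FiniteDimensional k (a ⟶ b)]

theorem fd_hom_fg_fg (M N : Mod k C) (hM : FGmod k C M) (hN : FGmod k C N) :
    FiniteDimensional k (M ⟶ N) := by
  obtain ⟨P, p, ⟨n, a, s, r, hsr⟩, hepi⟩ := hM
  refine fd_hom_of_epi k C p hepi ?_
  refine fd_hom_of_retract k C s r hsr ?_
  refine fd_hom_biproduct_left k C _ N ?_
  intro i
  exact fd_hom_stdProj k C (a i) N (pw_of_fg k C hN (a i))

theorem fd_hom_fcg_fcg (M N : Mod k C) (hM : FCGmod k C M) (hN : FCGmod k C N) :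
    FiniteDimensional k (M ⟶ N) := by
  obtain ⟨I, m, ⟨n, a, s, r, hsr⟩, hmono⟩ := hN
  refine fd_hom_of_mono k C m hmono ?_
  refine fd_hom_of_retract' k C s r hsr ?_
  refine fd_hom_biproduct_right k C M _ ?_
  intro i
  exact fd_hom_stdInj k C M (a i) (pw_of_fcg k C hM (a i))

end Final

end KSAux


open CategoryTheory CategoryTheory.Limits ARPaper in
/-- The categories of finitely generated and of finitely cogenerated
`C`-modules are Hom-finite and Krull–Schmidt: Hom spaces are finite dimensional and
every object is a finite direct sum of objects with local endomorphism rings. -/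
theorem fg_fcg_homFinite_krullSchmidt
    (k : Type) [Field k] (C : Type) [SmallCategory C] [Preadditive C]
    [CategoryTheory.Linear k C] [∀ a b : C, FiniteDimensional k (a ⟶ b)] :
    (∀ M N : Mod k C, FGmod k C M → FGmod k C N → FiniteDimensional k (M ⟶ N)) ∧
    (∀ M N : Mod k C, FCGmod k C M → FCGmod k C N → FiniteDimensional k (M ⟶ N)) ∧
    (∀ M : Mod k C, FGmod k C M →
      ∃ (n : ℕ) (F : Fin n → Mod k C),
        (∀ i, IsLocalRing (End (F i))) ∧ Nonempty (M ≅ ⨁ F)) ∧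
    (∀ M : Mod k C, FCGmod k C M →
      ∃ (n : ℕ) (F : Fin n → Mod k C),
        (∀ i, IsLocalRing (End (F i))) ∧ Nonempty (M ≅ ⨁ F)) := by
  constructor
  · exact fun M N hM hN => KSAux.fd_hom_fg_fg k C M N hM hN
  constructor
  · exact fun M N hM hN => KSAux.fd_hom_fcg_fcg k C M N hM hN
  constructor
  · intro M hM
    have hfd : FiniteDimensional k (M ⟶ M) := KSAux.fd_hom_fg_fg k C M M hM hM
    exact KSAux.ks_aux k (Module.finrank k (M ⟶ M)) M hfd le_rfl
  · intro M hM
    have hfd : FiniteDimensional k (M ⟶ M) := KSAux.fd_hom_fcg_fcg k C M M hM hM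
    exact KSAux.ks_aux k (Module.finrank k (M ⟶ M)) M hfd le_rfl
end
end

section
/- Let C be a k-linear Hom-finite category of type A_∞ (objects are natural numbers, C(j,i)=0 for i<j). Then every finitely cogenerated injective C-module is finite dimensional, i.e., only finitely many values are nonzero and each is finite dimensional over k. -/
noncomputable section
namespace ARPaper
open CategoryTheory

/-- A `C`-module is finite dimensional if only finitely many of its values are nonzero
and each value is a finite dimensional `k`-vector space. -/
def FinDim {k : Type} [Field k] {C : Type} [SmallCategory C] (M : Mod k C) : Prop :=
  (∀ a : C, FiniteDimensional k (M.obj a)) ∧ Set.Finite {a : C | ¬ Subsingleton (M.obj a)}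

end ARPaper

open CategoryTheory ARPaper in
/-- Over a Hom-finite `k`-linear category of type `A_∞`, every
finitely cogenerated injective module is finite dimensional. -/
theorem fcgInj_finDim
    (k : Type) [Field k] [SmallCategory ℕ] [Preadditive ℕ] [CategoryTheory.Linear k ℕ]
    [∀ a b : ℕ, FiniteDimensional k (a ⟶ b)]
    (hA : ∀ i j : ℕ, i < j → ∀ f : (j ⟶ i), f = 0)
    (I : Mod k ℕ) (hI : FCGInj k ℕ I) :
    FinDim I := by
  classical
  obtain ⟨n, a, s, r, hsr⟩ := hI
  -- each value of a standard injective is finite dimensional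
  have hstdfin : ∀ (i : Fin n) (x : ℕ), FiniteDimensional k ((stdInj k ℕ (a i)).obj x) := by
    intro i x
    haveI : FiniteDimensional k (((linearYoneda k ℕ).obj (a i)).obj (Opposite.op x)) :=
      inferInstanceAs (FiniteDimensional k (x ⟶ a i))
    show FiniteDimensional k (Module.Dual k (((linearYoneda k ℕ).obj (a i)).obj (Opposite.op x)))
    infer_instance
  -- pointwise retraction
  have hrs : ∀ (x : ℕ) (m : I.obj x), (r.app x) ((s.app x) m) = m := by
    intro x m
    have hretr : (s.app x) ≫ (r.app x) = 𝟙 (I.obj x) := by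
      rw [← NatTrans.comp_app, hsr]; rfl
    have := congrArg (fun f => (f : I.obj x ⟶ I.obj x).hom m) hretr
    simpa using this
  -- pointwise form of `biproduct.total`
  have htotx : ∀ (x : ℕ) (m : (⨁ fun i => stdInj k ℕ (a i)).obj x),
      ∑ i : Fin n, (Limits.biproduct.ι (fun i => stdInj k ℕ (a i)) i).app x
        ((Limits.biproduct.π (fun i => stdInj k ℕ (a i)) i).app x m) = m := by
    intro x m
    have htot := congrArg (fun t => NatTrans.app t x)
      (Limits.biproduct.total (f := fun i => stdInj k ℕ (a i)))
    simp only [NatTrans.app_sum, NatTrans.comp_app, NatTrans.id_app] at htot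
    calc ∑ i : Fin n, (Limits.biproduct.ι (fun i => stdInj k ℕ (a i)) i).app x
          ((Limits.biproduct.π (fun i => stdInj k ℕ (a i)) i).app x m)
        = ∑ i : Fin n, ((Limits.biproduct.π (fun i => stdInj k ℕ (a i)) i).app x ≫
            (Limits.biproduct.ι (fun i => stdInj k ℕ (a i)) i).app x) m :=
          Finset.sum_congr rfl (fun i _ => rfl)
      _ = (∑ i : Fin n, (Limits.biproduct.π (fun i => stdInj k ℕ (a i)) i).app x ≫
            (Limits.biproduct.ι (fun i => stdInj k ℕ (a i)) i).app x) m :=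
          by
            change _ = (ModuleCat.Hom.hom (∑ i : Fin n, (Limits.biproduct.π (fun i => stdInj k ℕ (a i)) i).app x ≫
              (Limits.biproduct.ι (fun i => stdInj k ℕ (a i)) i).app x :
              (⨁ fun i => stdInj k ℕ (a i)).obj x ⟶ (⨁ fun i => stdInj k ℕ (a i)).obj x)) m
            rw [ModuleCat.hom_sum, LinearMap.sum_apply]
      _ = (𝟙 ((⨁ fun i => stdInj k ℕ (a i)).obj x)) m := by rw [htot]
      _ = m := rfl
  -- the biproduct is pointwise finite dimensional
  have hBfin : ∀ x : ℕ, FiniteDimensional k ((⨁ fun i => stdInj k ℕ (a i)).obj x) := by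
    intro x
    haveI := fun i => hstdfin i x
    set Φ : (∀ i : Fin n, ((stdInj k ℕ (a i)).obj x : Type)) →ₗ[k]
        (⨁ fun i => stdInj k ℕ (a i)).obj x :=
      ∑ i : Fin n,
        ((Limits.biproduct.ι (fun i => stdInj k ℕ (a i)) i).app x).hom.comp
          (LinearMap.proj i) with hΦ
    have hsurj : Function.Surjective Φ := by
      intro m
      refine ⟨fun i => (Limits.biproduct.π (fun i => stdInj k ℕ (a i)) i).app x m, ?_⟩
      rw [hΦ]
      rw [LinearMap.sum_apply]
      exact htotx x m
    exact Module.Finite.of_surjective Φ hsurj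
  constructor
  · intro x
    haveI := hBfin x
    exact Module.Finite.of_surjective
      (r.app x).hom
      (fun m => ⟨(s.app x) m, hrs x m⟩)
  · -- finitely many nonzero values
    apply Set.Finite.subset (Set.finite_Iic (Finset.univ.sup a))
    intro x hx
    by_contra hxgt
    simp only [Set.mem_Iic, not_le] at hxgt
    have hlt : ∀ i : Fin n, a i < x := fun i =>
      lt_of_le_of_lt (Finset.le_sup (Finset.mem_univ i)) hxgt
    -- each standard injective is subsingleton at x
    have hsub : ∀ i : Fin n, Subsingleton ((stdInj k ℕ (a i)).obj x) := by
      intro i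
      haveI : Subsingleton (((linearYoneda k ℕ).obj (a i)).obj (Opposite.op x)) := by
        constructor
        intro f g
        have hf : (f : x ⟶ a i) = 0 := hA (a i) x (hlt i) f
        have hg : (g : x ⟶ a i) = 0 := hA (a i) x (hlt i) g
        exact hf.trans hg.symm
      show Subsingleton (Module.Dual k (((linearYoneda k ℕ).obj (a i)).obj (Opposite.op x)))
      infer_instance
    -- hence the biproduct is subsingleton at x
    have hBsub : Subsingleton ((⨁ fun i => stdInj k ℕ (a i)).obj x) := by
      constructor
      intro m m'
      have hm : ∀ m : ((⨁ fun i => stdInj k ℕ (a i)).obj x), m = 0 := by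
        intro m
        rw [← htotx x m]
        apply Finset.sum_eq_zero
        intro i _
        haveI := hsub i
        have h0 : ((Limits.biproduct.π (fun i => stdInj k ℕ (a i)) i).app x) m
            = (0 : (stdInj k ℕ (a i)).obj x) := Subsingleton.elim _ _
        rw [h0]
        exact map_zero _
      rw [hm m, hm m']
    -- so I.obj x is subsingleton, contradiction
    apply hx
    constructor
    intro m m'
    have hss : (s.app x) m = (s.app x) m' := Subsingleton.elim _ _
    calc m = (r.app x) ((s.app x) m) := (hrs x m).symm
      _ = (r.app x) ((s.app x) m') := by rw [hss]
      _ = m' := hrs x m'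
end
end

section
/- Let C be a k-linear Hom-finite category of type A_∞ with Mod C locally Noetherian, and let f : M → N be a morphism of finitely presented C-modules. Then f is projectively trivial in the abelian category fp C if and only if f is projectively trivial in Mod C. -/
noncomputable section
namespace ARPaper
open CategoryTheory CategoryTheory.Limits Opposite

variable {k : Type} [Field k] {C : Type} [SmallCategory C] [Preadditive C] [Linear k C]

section Hom

variable (k)

/-- The Hom-space `Hom_C(M,N)` as a `k`-module. -/
def HomMod (M N : Mod k C) : ModuleCat k := ModuleCat.of k (M ⟶ N)

/-- Precomposition `Hom(Y,W) ⟶ Hom(X,W)` with `f : X ⟶ Y`. -/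
def homPre {X Y : Mod k C} (f : X ⟶ Y) (W : Mod k C) : HomMod k Y W ⟶ HomMod k X W :=
  ModuleCat.ofHom
    { toFun := fun g => f ≫ g
      map_add' := fun g h => by simp
      map_smul' := fun r g => by simp }

/-- Postcomposition `Hom(W,X) ⟶ Hom(W,Y)` with `f : X ⟶ Y`. -/
def homPost (W : Mod k C) {X Y : Mod k C} (f : X ⟶ Y) : HomMod k W X ⟶ HomMod k W Y :=
  ModuleCat.ofHom
    { toFun := fun g => g ≫ f
      map_add' := fun g h => by simp
      map_smul' := fun r g => by simp }

/-- The `C ᵒᵖ`-module `M^* = Hom_C(M, C(-,-))`, i.e. `a ↦ Hom_C(M, C(a,-))`. -/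
def starObj (M : Mod k C) : Cᵒᵖ ⥤ ModuleCat k where
  obj a := HomMod k M ((linearCoyoneda k C).obj a)
  map {a b} φ := homPost k M ((linearCoyoneda k C).map φ)
  map_id a := by
    ext g : 2
    simp [homPost, HomMod]
    rfl
  map_comp {a b c} φ ψ := by
    ext g : 2
    simp [homPost, HomMod]
    exact (Category.assoc (obj := Mod k C) _ _ _).symm

/-- The morphism `f^* : N^* ⟶ M^*` induced by `f : M ⟶ N`. -/
def starMap {M N : Mod k C} (f : M ⟶ N) : starObj k N ⟶ starObj k M where
  app a := homPre k f ((linearCoyoneda k C).obj a)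
  naturality a b φ := by
    ext g : 2
    simp [homPre, homPost, starObj, HomMod]
    exact (Category.assoc (obj := Mod k C) _ _ _).symm

/-- The transpose of (the module presented by) `d : P₁ ⟶ P₀`:
the cokernel of `d^* : P₀^* ⟶ P₁^*`. -/
def Transpose {P1 P0 : Mod k C} (d : P1 ⟶ P0) : Cᵒᵖ ⥤ ModuleCat k :=
  cokernel (starMap k d)

/-- `D Tr` of the module presented by `d`. -/
def DTr {P1 P0 : Mod k C} (d : P1 ⟶ P0) : Mod k C :=
  DModL k C (Transpose k d)

end Hom

end ARPaper
namespace ARPaper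
open CategoryTheory CategoryTheory.Limits Opposite

section General
variable {D : Type u} [Category.{v} D] [Abelian D]

/-- `0 → X → Y → Z → 0` is a short exact sequence. -/
def IsSES {X Y Z : D} (i : X ⟶ Y) (p : Y ⟶ Z) : Prop :=
  ∃ w : i ≫ p = 0, Mono i ∧ Epi p ∧ (ShortComplex.mk i p w).Exact

/-- A morphism is right minimal if every endomorphism of its source compatible with it
is an isomorphism. -/
def RightMinimal {X Y : D} (f : X ⟶ Y) : Prop :=
  ∀ g : X ⟶ X, g ≫ f = f → IsIso g

/-- A morphism is left minimal if every endomorphism of its target compatible with it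
is an isomorphism. -/
def LeftMinimal {X Y : D} (f : X ⟶ Y) : Prop :=
  ∀ g : Y ⟶ Y, f ≫ g = f → IsIso g

/-- `q : E ⟶ M` is right almost split: it is not a retraction, and every non-retraction
into `M` factors through it. -/
def RightAlmostSplit {E M : D} (q : E ⟶ M) : Prop :=
  ¬ IsSplitEpi q ∧ ∀ ⦃X : D⦄ (g : X ⟶ M), ¬ IsSplitEpi g → ∃ h : X ⟶ E, h ≫ q = g

/-- `i : X ⟶ E` is left almost split. -/
def LeftAlmostSplit {X E : D} (i : X ⟶ E) : Prop :=
  ¬ IsSplitMono i ∧ ∀ ⦃Y : D⦄ (g : X ⟶ Y), ¬ IsSplitMono g → ∃ h : E ⟶ Y, i ≫ h = g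

/-- An almost split (Auslander–Reiten) sequence. -/
def AlmostSplitSeq {X E M : D} (i : X ⟶ E) (q : E ⟶ M) : Prop :=
  IsSES i q ∧ LeftAlmostSplit i ∧ RightAlmostSplit q

/-- An object is indecomposable if it is nonzero and any biproduct decomposition
has a zero summand. -/
def Indecomposable (M : D) : Prop :=
  ¬ IsZero M ∧ ∀ (X Y : D), (M ≅ X ⊞ Y) → IsZero X ∨ IsZero Y

end General

variable {k : Type} [Field k] {C : Type} [SmallCategory C] [Preadditive C] [Linear k C]
variable (k C)

/-- A (finite) projective presentation `P₁ → P₀ → M → 0` by f.g. projectives. -/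
structure Pres (M : Mod k C) : Type 1 where
  P1 : Mod k C
  P0 : Mod k C
  fg1 : FGProj k C P1
  fg0 : FGProj k C P0
  proj1 : Projective P1
  proj0 : Projective P0
  d : P1 ⟶ P0
  p : P0 ⟶ M
  epi : Epi p
  w : d ≫ p = 0
  exact : (ShortComplex.mk d p w).Exact

/-- A minimal projective presentation. -/
structure MinPres (M : Mod k C) extends Pres k C M where
  min0 : RightMinimal p
  min1 : RightMinimal d

/-- `M` is finitely presented: it admits a presentation by f.g. projectives. -/
def FPmod (M : Mod k C) : Prop := Nonempty (Pres k C M)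

variable {k C}

/-- `D Tr M` computed from a presentation of `M`. -/
def Pres.DTrM {M : Mod k C} (pr : Pres k C M) : Mod k C := DTr k pr.d

/-- `Ext^1(M, N)` computed from a presentation of `M`:
the cokernel of `Hom(P₀,N) → Hom(Ω M, N)`. -/
def Pres.ext1 {M : Mod k C} (pr : Pres k C M) (N : Mod k C) : ModuleCat k :=
  cokernel (homPre k (kernel.ι pr.p) N)

end ARPaper
namespace ARPaper
open CategoryTheory CategoryTheory.Limits Opposite

section Trivial
variable {D : Type u} [Category.{v} D] [Abelian D]

/-- `f` is projectively trivial, i.e. `Ext¹(f,Z) = 0` for all `Z`; equivalently `f`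
factors through every epimorphism onto its target. -/
def ProjTrivial {X Y : D} (f : X ⟶ Y) : Prop :=
  ∀ (E : D) (p : E ⟶ Y), Epi p → ∃ h : X ⟶ E, h ≫ p = f

/-- `f` is injectively trivial, i.e. `Ext¹(Z,f) = 0` for all `Z`; equivalently `f`
factors through every monomorphism out of its source. -/
def InjTrivial {X Y : D} (f : X ⟶ Y) : Prop :=
  ∀ (E : D) (m : X ⟶ E), Mono m → ∃ h : E ⟶ Y, m ≫ h = f

/-- Relative version: projectively trivial within the full subcategory of objects
satisfying `Pred`. -/
def ProjTrivialOn (Pred : D → Prop) {X Y : D} (f : X ⟶ Y) : Prop :=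
  ∀ (E : D) (p : E ⟶ Y), Pred E → Epi p → ∃ h : X ⟶ E, h ≫ p = f

/-- Relative version: injectively trivial within the full subcategory of objects
satisfying `Pred`. -/
def InjTrivialOn (Pred : D → Prop) {X Y : D} (f : X ⟶ Y) : Prop :=
  ∀ (E : D) (m : X ⟶ E), Pred E → Mono m → ∃ h : E ⟶ Y, m ≫ h = f

end Trivial

variable {k : Type} [Field k] {C : Type} [SmallCategory C] [Preadditive C] [Linear k C]
variable (k)

/-- The submodule of `Hom(M,N)` of morphisms projectively trivial relative to `Pred`. -/
def ptrivSub (Pred : Mod k C → Prop) (M N : Mod k C) : Submodule k (M ⟶ N) where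
  carrier := {f | ProjTrivialOn Pred f}
  add_mem' := by
    intro f g hf hg E p hE hp
    obtain ⟨h1, e1⟩ := hf E p hE hp
    obtain ⟨h2, e2⟩ := hg E p hE hp
    exact ⟨h1 + h2, by simp [e1, e2]⟩
  zero_mem' := fun E p hE hp => ⟨0, by simp⟩
  smul_mem' := by
    intro r f hf E p hE hp
    obtain ⟨h1, e1⟩ := hf E p hE hp
    exact ⟨r • h1, by simp [e1]⟩

/-- The submodule of `Hom(M,N)` of morphisms injectively trivial relative to `Pred`. -/
def itrivSub (Pred : Mod k C → Prop) (M N : Mod k C) : Submodule k (M ⟶ N) where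
  carrier := {f | InjTrivialOn Pred f}
  add_mem' := by
    intro f g hf hg E m hE hm
    obtain ⟨h1, e1⟩ := hf E m hE hm
    obtain ⟨h2, e2⟩ := hg E m hE hm
    exact ⟨h1 + h2, by simp [e1, e2]⟩
  zero_mem' := fun E m hE hm => ⟨0, by simp⟩
  smul_mem' := by
    intro r f hf E m hE hm
    obtain ⟨h1, e1⟩ := hf E m hE hm
    exact ⟨r • h1, by simp [e1]⟩

/-- The stable Hom `\underline{Hom}(M,N)` relative to `Pred`. -/
def HomU (Pred : Mod k C → Prop) (M N : Mod k C) : ModuleCat k :=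
  ModuleCat.of k ((M ⟶ N) ⧸ ptrivSub k Pred M N)

/-- The costable Hom `\overline{Hom}(M,N)` relative to `Pred`. -/
def HomO (Pred : Mod k C → Prop) (M N : Mod k C) : ModuleCat k :=
  ModuleCat.of k ((M ⟶ N) ⧸ itrivSub k Pred M N)

/-- Class of a morphism in the stable Hom. -/
def HomU.mk (Pred : Mod k C → Prop) {M N : Mod k C} (f : M ⟶ N) : HomU k Pred M N :=
  Submodule.Quotient.mk f

/-- Class of a morphism in the costable Hom. -/
def HomO.mk (Pred : Mod k C → Prop) {M N : Mod k C} (f : M ⟶ N) : HomO k Pred M N :=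
  Submodule.Quotient.mk f

end ARPaper

open CategoryTheory CategoryTheory.Limits ARPaper in
/-- Over a Hom-finite `k`-linear category of type `A_∞` with `Mod C`
locally Noetherian, a morphism of finitely presented modules is projectively trivial in
`fp C` (i.e. factors through every epimorphism in `fp C` onto its target) if and only if
it is projectively trivial in `Mod C`. -/
theorem projTrivial_fp_iff_projTrivial
    (k : Type) [Field k] [SmallCategory ℕ] [Preadditive ℕ] [CategoryTheory.Linear k ℕ]
    [∀ a b : ℕ, FiniteDimensional k (a ⟶ b)]
    (hA : ∀ i j : ℕ, i < j → ∀ f : (j ⟶ i), f = 0)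
    (noeth : ∀ (M N : Mod k ℕ) (m : N ⟶ M), FGmod k ℕ M → Mono m → FGmod k ℕ N)
    {M N : Mod k ℕ} (hM : FPmod k ℕ M) (hN : FPmod k ℕ N) (f : M ⟶ N) :
    ProjTrivialOn (FPmod k ℕ) f ↔ ProjTrivial f := by
  constructor
  · intro h E p hp
    obtain ⟨qr⟩ := hN
    -- Q0 is finitely presented: trivial presentation `Q0 → Q0 → Q0 → 0` with d = 0, p = 𝟙
    have hQ0 : FPmod k ℕ qr.P0 := ⟨{
      P1 := qr.P0, P0 := qr.P0, fg1 := qr.fg0, fg0 := qr.fg0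
      proj1 := qr.proj0, proj0 := qr.proj0
      d := 0, p := 𝟙 qr.P0, epi := inferInstance
      w := by simp
      exact := by
        rw [ShortComplex.exact_iff_mono]
        · infer_instance
        · rfl }⟩
    have := qr.epi
    obtain ⟨g, hg⟩ := h qr.P0 qr.p hQ0 qr.epi
    have := qr.proj0
    exact ⟨g ≫ Projective.factorThru qr.p p, by
      rw [Category.assoc, Projective.factorThru_comp, hg]⟩
  · intro h E p hE hp
    exact h E p hp
end
end
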